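/- Let n ≥ 3 and, for 1 ≤ i ≤ n, let S_{n−1}²[i] be the subgraph of the split-star network S_n² induced by the permutations whose value in the n-th position equals i. Then any two vertices lying in different copies S_{n−1}²[i] and S_{n−1}²[j] (i ≠ j) have at most one common outside neighbour. -/

import Mathlib

def cayleyGraph {G : Type*} [Group G] (S : Set G) : SimpleGraph G :=
  SimpleGraph.fromRel (fun x y => ∃ s ∈ S, y = x * s)

def splitStar (n : ℕ) (hn : 3 ≤ n) : SimpleGraph (Equiv.Perm (Fin n)) :=
  cayleyGraph ({σ | ∃ i : Fin n, 1 ≤ (i : ℕ) ∧ σ = Equiv.swap ⟨0, by omega⟩ i} ∪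
    {σ | ∃ i : Fin n, 2 ≤ (i : ℕ) ∧ σ = Equiv.swap ⟨1, by omega⟩ i})

lemma outside_nbr (n : ℕ) (hn : 3 ≤ n) (u w : Equiv.Perm (Fin n))
    (hadj : (splitStar n hn).Adj u w)
    (hw : w ⟨n - 1, Nat.sub_lt (by omega) Nat.one_pos⟩ ≠ u ⟨n - 1, Nat.sub_lt (by omega) Nat.one_pos⟩) :
    w = u * Equiv.swap ⟨0, by omega⟩ ⟨n - 1, Nat.sub_lt (by omega) Nat.one_pos⟩ ∨
    w = u * Equiv.swap ⟨1, by omega⟩ ⟨n - 1, Nat.sub_lt (by omega) Nat.one_pos⟩ := by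
  rw [splitStar, cayleyGraph, SimpleGraph.fromRel_adj] at hadj
  obtain ⟨hne, h⟩ := hadj
  have key : ∃ s ∈ ({σ | ∃ i : Fin n, 1 ≤ (i : ℕ) ∧ σ = Equiv.swap ⟨0, by omega⟩ i} ∪
      {σ | ∃ i : Fin n, 2 ≤ (i : ℕ) ∧ σ = Equiv.swap ⟨1, by omega⟩ i} : Set (Equiv.Perm (Fin n))),
      w = u * s := by
    rcases h with ⟨s, hs, h⟩ | ⟨s, hs, h⟩
    · exact ⟨s, hs, h⟩
    · refine ⟨s, hs, ?_⟩
      have hss : s * s = 1 := by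
        rcases hs with ⟨i, _, rfl⟩ | ⟨i, _, rfl⟩ <;> exact Equiv.swap_mul_self _ _
      rw [h, mul_assoc, hss, mul_one]
  obtain ⟨s, hs, rfl⟩ := key
  rcases hs with ⟨i, hi, rfl⟩ | ⟨i, hi, rfl⟩
  · left
    have : i = ⟨n - 1, by omega⟩ := by
      by_contra hin
      apply hw
      simp only [Equiv.Perm.mul_apply]
      rw [Equiv.swap_apply_of_ne_of_ne (by simp [Fin.ext_iff]; omega) (Ne.symm hin)]
    rw [this]
  · right
    have : i = ⟨n - 1, by omega⟩ := by
      by_contra hin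
      apply hw
      simp only [Equiv.Perm.mul_apply]
      rw [Equiv.swap_apply_of_ne_of_ne (by simp [Fin.ext_iff]; omega) (Ne.symm hin)]
    rw [this]

theorem stmt_8 (n : ℕ) (hn : 3 ≤ n)
    (u v : Equiv.Perm (Fin n))
    (huv : u ⟨n - 1, by omega⟩ ≠ v ⟨n - 1, by omega⟩) :
    {w : Equiv.Perm (Fin n) |
      (splitStar n hn).Adj u w ∧ w ⟨n - 1, by omega⟩ ≠ u ⟨n - 1, by omega⟩ ∧
      (splitStar n hn).Adj v w ∧ w ⟨n - 1, by omega⟩ ≠ v ⟨n - 1, by omega⟩}.ncard ≤ 1 := by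
  have h3 : 0 < n := by omega
  have hsub : {w : Equiv.Perm (Fin n) |
      (splitStar n hn).Adj u w ∧ w ⟨n - 1, by omega⟩ ≠ u ⟨n - 1, by omega⟩ ∧
      (splitStar n hn).Adj v w ∧ w ⟨n - 1, by omega⟩ ≠ v ⟨n - 1, by omega⟩}.Subsingleton := by
    intro a ha b hb
    obtain ⟨ha1, ha2, ha3, ha4⟩ := ha
    obtain ⟨hb1, hb2, hb3, hb4⟩ := hb
    have hau := outside_nbr n hn u a ha1 ha2
    have hav := outside_nbr n hn v a ha3 ha4
    have hbu := outside_nbr n hn u b hb1 hb2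
    have hbv := outside_nbr n hn v b hb3 hb4
    set p0 : Fin n := ⟨0, by omega⟩ with hp0
    set p1 : Fin n := ⟨1, by omega⟩ with hp1
    set pn : Fin n := ⟨n - 1, by omega⟩ with hpn
    have h01 : p0 ≠ p1 := by simp [hp0, hp1, Fin.ext_iff]
    have h0n : p0 ≠ pn := by simp [hp0, hpn, Fin.ext_iff]; omega
    have h1n : p1 ≠ pn := by simp [hp1, hpn, Fin.ext_iff]; omega
    set s0 : Equiv.Perm (Fin n) := Equiv.swap p0 pn with hs0
    set s1 : Equiv.Perm (Fin n) := Equiv.swap p1 pn with hs1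
    -- key inequalities
    have huv0 : u * s0 ≠ v * s0 := fun h => huv (by rw [mul_right_cancel h])
    have huv1 : u * s1 ≠ v * s1 := fun h => huv (by rw [mul_right_cancel h])
    have hs01 : u * s0 ≠ u * s1 := by
      intro h
      have : s0 = s1 := mul_left_cancel h
      have := congrArg (fun σ : Equiv.Perm (Fin n) => σ p1) this
      simp only [hs0, hs1] at this
      rw [Equiv.swap_apply_of_ne_of_ne (Ne.symm h01) h1n, Equiv.swap_apply_left] at this
      exact h1n this
    have hcomm : s0 * s1 ≠ s1 * s0 := by
      intro h
      have := congrArg (fun σ : Equiv.Perm (Fin n) => σ pn) h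
      simp only [Equiv.Perm.mul_apply, hs0, hs1] at this
      rw [Equiv.swap_apply_right, Equiv.swap_apply_right,
        Equiv.swap_apply_of_ne_of_ne (Ne.symm h01) h1n,
        Equiv.swap_apply_of_ne_of_ne h01 h0n] at this
      exact h01 this.symm
    have hcross : ¬(u * s0 = v * s1 ∧ u * s1 = v * s0) := by
      rintro ⟨e1, e2⟩
      apply hcomm
      have k1 : v = u * s0 * s1 := by
        rw [e1, mul_assoc, Equiv.swap_mul_self, mul_one]
      have k2 : v = u * s1 * s0 := by
        rw [e2, mul_assoc, Equiv.swap_mul_self, mul_one]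
      have : u * (s0 * s1) = u * (s1 * s0) := by
        rw [← mul_assoc, ← mul_assoc, ← k1, ← k2]
      exact mul_left_cancel this
    rcases hau with rfl | rfl <;> rcases hbu with rfl | rfl <;>
      first
        | rfl
        | (exfalso; rcases hav with h1 | h1 <;> rcases hbv with h2 | h2 <;>
            first
              | exact huv0 h1 | exact huv1 h1 | exact huv0 h2 | exact huv1 h2
              | exact hcross ⟨h1, h2⟩ | exact hcross ⟨h2, h1⟩)
  exact (Set.ncard_le_one_iff hsub.finite).mpr (fun ha hb => hsub ha hb)
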